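/- Let n ≥ 3 and let f = a·m_3 + b·m_{21} + c·m_{111} in R[x_1,...,x_n] with (a,b,c) not proportional to (1,3,6). Then f is an n-exception if and only if 6a(2b + (n−2)c) = 4(n−1)b². -/

import Mathlib

open MvPolynomial

/-- `E^{(2)}(f) = Σ_j x_j ∂²f/∂x_j²`. -/
noncomputable def polarE2 (n : ℕ) (f : MvPolynomial (Fin n) ℝ) : MvPolynomial (Fin n) ℝ :=
  ∑ j : Fin n, X j * pderiv j (pderiv j f)

/-- The span of the first-order partial derivatives of `f` together with `E^{(2)}(f)`. -/
noncomputable def exceptionSpan (n : ℕ) (f : MvPolynomial (Fin n) ℝ) :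
    Submodule ℝ (MvPolynomial (Fin n) ℝ) :=
  Submodule.span ℝ (Set.range (fun j : Fin n => pderiv j f) ∪ {polarE2 n f})

/-- `f` is an `n`-exception if the span of `∂f/∂x_1, …, ∂f/∂x_n, E^{(2)}(f)`
has dimension exactly `n`. -/
def IsException (n : ℕ) (f : MvPolynomial (Fin n) ℝ) : Prop :=
  Module.finrank ℝ (exceptionSpan n f) = n

/-- The monomial symmetric polynomial `m_3 = Σ_j x_j³`. -/
noncomputable def msym3 (n : ℕ) : MvPolynomial (Fin n) ℝ := ∑ j : Fin n, X j ^ 3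

/-- The monomial symmetric polynomial `m_{21} = Σ_{i ≠ j} x_i² x_j`. -/
noncomputable def msym21 (n : ℕ) : MvPolynomial (Fin n) ℝ :=
  ∑ i : Fin n, ∑ j : Fin n, if i = j then 0 else X i ^ 2 * X j

/-- The monomial symmetric polynomial `m_{111} = Σ_{i < j < k} x_i x_j x_k`. -/
noncomputable def msym111 (n : ℕ) : MvPolynomial (Fin n) ℝ :=
  ∑ s ∈ Finset.univ.powersetCard 3, ∏ a ∈ s, X a

section AuxException
open Finset

noncomputable def P1 (n : ℕ) : MvPolynomial (Fin n) ℝ := ∑ i, X i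
noncomputable def P2 (n : ℕ) : MvPolynomial (Fin n) ℝ := ∑ i, X i ^ 2
noncomputable def P3 (n : ℕ) : MvPolynomial (Fin n) ℝ := ∑ i, X i ^ 3

/-- first-derivative polynomial -/
noncomputable def gp (n : ℕ) (a b c : ℝ) (j : Fin n) : MvPolynomial (Fin n) ℝ :=
  C (3*a - 3*b + c) * X j ^ 2 + C (2*b - c) * (X j * P1 n)
    + C (b - c * (2⁻¹:ℝ)) * P2 n + C (c * (2⁻¹:ℝ)) * P1 n ^ 2

/-- the polarization polynomial -/
noncomputable def Ep (n : ℕ) (a b : ℝ) : MvPolynomial (Fin n) ℝ :=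
  C (6*a - 2*b) * P2 n + C (2*b) * P1 n ^ 2

lemma pd1 (n : ℕ) (j : Fin n) : pderiv j (P1 n) = 1 := by
  rw [P1, map_sum]
  simp [pderiv_X, Pi.single_apply]

lemma pd2 (n : ℕ) (j : Fin n) : pderiv j (P2 n) = 2 * X j := by
  rw [P2, map_sum]
  simp only [pow_two, pderiv_mul, pderiv_X, Pi.single_apply]
  simp [add_mul, ite_mul, mul_ite, zero_mul, mul_zero, Finset.sum_add_distrib,
    Finset.sum_ite_eq, Finset.sum_ite_eq']
  ring

lemma pd3 (n : ℕ) (j : Fin n) : pderiv j (P3 n) = 3 * X j ^ 2 := by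
  rw [P3, map_sum]
  simp only [pow_succ, pow_zero, one_mul, pderiv_mul, pderiv_X, Pi.single_apply]
  simp [add_mul, ite_mul, mul_ite, zero_mul, mul_zero, Finset.sum_add_distrib,
    Finset.sum_ite_eq, Finset.sum_ite_eq']
  ring

lemma m3_eq (n : ℕ) : msym3 n = P3 n := rfl

lemma m21_eq (n : ℕ) : msym21 n = P1 n * P2 n - P3 n := by
  have h : ∀ i : Fin n, (∑ j : Fin n, if i = j then 0 else X i ^ 2 * X j)
      = X i ^ 2 * P1 n - X i ^ 3 := by
    intro i
    have : ∀ j : Fin n, (if i = j then (0 : MvPolynomial (Fin n) ℝ) else X i ^ 2 * X j)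
        = X i ^ 2 * X j - (if i = j then X i ^ 2 * X j else 0) := by
      intro j; by_cases h : i = j <;> simp [h]
    rw [Finset.sum_congr rfl (fun j _ => this j), Finset.sum_sub_distrib,
      Finset.sum_ite_eq, ← Finset.mul_sum]
    simp [P1]; ring
  rw [msym21, Finset.sum_congr rfl (fun i _ => h i), Finset.sum_sub_distrib,
    ← Finset.sum_mul]
  rw [show (∑ i : Fin n, X i ^ 2 : MvPolynomial (Fin n) ℝ) = P2 n from rfl,
    show (∑ i : Fin n, X i ^ 3 : MvPolynomial (Fin n) ℝ) = P3 n from rfl]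
  ring

lemma m111_eq (n : ℕ) : msym111 n =
    C (6:ℝ)⁻¹ * (P1 n ^ 3 - 3 * (P1 n * P2 n) + 2 * P3 n) := by
  have h2 : psum (Fin n) ℝ 2 = -2 * esymm (Fin n) ℝ 2 + P1 n * P1 n := by
    rw [psum_eq_mul_esymm_sub_sum _ _ 2 (by norm_num)]
    have : Finset.filter (fun a => a.1 ∈ Set.Ioo 0 2) (Finset.HasAntidiagonal.antidiagonal 2)
        = ({(1,1)} : Finset (ℕ × ℕ)) := by decide
    rw [this]
    simp [esymm_one, psum_one, P1]; ring
  have h3 : psum (Fin n) ℝ 3 = 3 * esymm (Fin n) ℝ 3 + P1 n * psum (Fin n) ℝ 2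
      - esymm (Fin n) ℝ 2 * P1 n := by
    rw [psum_eq_mul_esymm_sub_sum _ _ 3 (by norm_num)]
    have : Finset.filter (fun a => a.1 ∈ Set.Ioo 0 3) (Finset.HasAntidiagonal.antidiagonal 3)
        = ({(1,2),(2,1)} : Finset (ℕ × ℕ)) := by decide
    rw [this]
    simp [esymm_one, psum_one, P1]; ring
  have hm : msym111 n = esymm (Fin n) ℝ 3 := rfl
  have hp2 : psum (Fin n) ℝ 2 = P2 n := rfl
  have hp3 : psum (Fin n) ℝ 3 = P3 n := rfl
  rw [hp2] at h2 h3
  rw [hp3] at h3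
  have h6 : (6 : MvPolynomial (Fin n) ℝ) * msym111 n
      = P1 n ^ 3 - 3 * (P1 n * P2 n) + 2 * P3 n := by
    rw [hm]; linear_combination -2 * h3 + P1 n * h2
  have hone : C (6:ℝ)⁻¹ * (6 : MvPolynomial (Fin n) ℝ) = 1 := by
    have h : (6 : MvPolynomial (Fin n) ℝ) = C (6:ℝ) := (map_ofNat C 6).symm
    rw [h, ← C_mul]; norm_num
  calc msym111 n = (C (6:ℝ)⁻¹ * 6) * msym111 n := by rw [hone, one_mul]
  _ = C (6:ℝ)⁻¹ * (P1 n ^ 3 - 3 * (P1 n * P2 n) + 2 * P3 n) := by rw [mul_assoc, h6]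

lemma pderiv_two (n : ℕ) (j : Fin n) : pderiv j (2 : MvPolynomial (Fin n) ℝ) = 0 := by
  rw [← map_ofNat (C : ℝ →+* MvPolynomial (Fin n) ℝ) 2, pderiv_C]
lemma pderiv_three (n : ℕ) (j : Fin n) : pderiv j (3 : MvPolynomial (Fin n) ℝ) = 0 := by
  rw [← map_ofNat (C : ℝ →+* MvPolynomial (Fin n) ℝ) 3, pderiv_C]
lemma pderiv_six (n : ℕ) (j : Fin n) : pderiv j (6 : MvPolynomial (Fin n) ℝ) = 0 := by
  rw [← map_ofNat (C : ℝ →+* MvPolynomial (Fin n) ℝ) 6, pderiv_C]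

lemma pderiv_f (n : ℕ) (a b c : ℝ) (j : Fin n) :
    pderiv j (a • msym3 n + b • msym21 n + c • msym111 n) = gp n a b c j := by
  rw [m3_eq, m21_eq, m111_eq, smul_eq_C_mul, smul_eq_C_mul, smul_eq_C_mul, gp]
  simp only [map_add, map_sub, map_mul, pderiv_mul, pderiv_C, pderiv_two, pderiv_three, pderiv_six, pow_succ,
    pow_zero, one_mul, pd1, pd2, pd3, zero_mul, mul_zero, zero_add, add_zero, mul_one, map_ofNat]
  have r6n : C (6⁻¹:ℝ) * (6 : MvPolynomial (Fin n) ℝ) = 1 := by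
    have h : C (6⁻¹:ℝ) * C (6:ℝ) = (1 : MvPolynomial (Fin n) ℝ) := by
      rw [← C_mul]; norm_num
    rwa [map_ofNat] at h
  have r62n : C (6⁻¹:ℝ) * (3 : MvPolynomial (Fin n) ℝ) = C (2⁻¹:ℝ) := by
    have h : C (6⁻¹:ℝ) * C (3:ℝ) = (C (2⁻¹:ℝ) : MvPolynomial (Fin n) ℝ) := by
      rw [← C_mul]; norm_num
    rwa [map_ofNat] at h
  linear_combination (C c * (X j * X j)) * r6n - (C c * (X j * P1 n)) * r6n
    - (C c * P2 n) * r62n + (C c * (P1 n * P1 n)) * r62n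

lemma polarE2_eq_aux (n : ℕ) (a b c : ℝ) (j : Fin n) :
    pderiv j (gp n a b c j) = C (6*a - 2*b) * X j + C (2*b) * P1 n := by
  rw [gp]
  simp only [map_add, map_sub, map_mul, pderiv_mul, pderiv_C, pderiv_two, pderiv_three, pderiv_six, pow_succ,
    pow_zero, one_mul, pderiv_X_self, pd1, pd2, zero_mul, mul_zero, zero_add, add_zero, mul_one, map_ofNat]
  have r2n : C (2⁻¹:ℝ) * (2 : MvPolynomial (Fin n) ℝ) = 1 := by
    have h : C (2⁻¹:ℝ) * C (2:ℝ) = (1 : MvPolynomial (Fin n) ℝ) := by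
      rw [← C_mul]; norm_num
    rwa [map_ofNat] at h
  linear_combination (C c * P1 n - C c * X j) * r2n


noncomputable def m2 {n : ℕ} (k : Fin n) : Fin n →₀ ℕ := Finsupp.single k 2
noncomputable def m11 {n : ℕ} (i k : Fin n) : Fin n →₀ ℕ := Finsupp.single i 1 + Finsupp.single k 1

variable {n : ℕ}

lemma sub21 (k : Fin n) : m2 k - Finsupp.single k 1 = Finsupp.single k 1 := by
  ext x; simp [m2, Finsupp.single_apply]; split <;> rfl

lemma coeff_X2_2 (j k : Fin n) :
    coeff (m2 k) (X j ^ 2 : MvPolynomial (Fin n) ℝ) = if j = k then 1 else 0 := by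
  rw [X_pow_eq_monomial, coeff_monomial, m2]
  simp [Finsupp.single_eq_single_iff]

lemma coeff_X2_11 (j i k : Fin n) (h : i ≠ k) :
    coeff (m11 i k) (X j ^ 2 : MvPolynomial (Fin n) ℝ) = 0 := by
  rw [X_pow_eq_monomial, coeff_monomial]
  have hne : Finsupp.single j 2 ≠ m11 i k := by
    intro hEq
    have h2 := DFunLike.congr_fun hEq i
    simp [m11, Finsupp.single_apply, Ne.symm h] at h2
    split at h2 <;> omega
  rw [if_neg hne]

lemma coeff_P1_single (k : Fin n) : coeff (Finsupp.single k 1) (P1 n) = 1 := by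
  rw [P1, coeff_sum]
  simp [coeff_X', Finsupp.single_eq_single_iff]

lemma support_m2 (k : Fin n) : (m2 k).support = {k} :=
  Finsupp.support_single_ne_zero k two_ne_zero

lemma support_m11 (i k : Fin n) (h : i ≠ k) : (m11 i k).support = {i, k} := by
  rw [m11, Finsupp.support_add_eq, Finsupp.support_single_ne_zero i one_ne_zero,
    Finsupp.support_single_ne_zero k one_ne_zero]
  · rfl
  · rw [Finsupp.support_single_ne_zero i one_ne_zero,
      Finsupp.support_single_ne_zero k one_ne_zero]
    simpa using Finset.disjoint_singleton.mpr h

lemma coeff_XP1_2 (j k : Fin n) :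
    coeff (m2 k) (X j * P1 n) = if j = k then 1 else 0 := by
  rw [coeff_X_mul', support_m2]
  by_cases h : j = k
  · subst h; simp [sub21, coeff_P1_single]
  · simp [h]

lemma coeff_XP1_11 (j i k : Fin n) (h : i ≠ k) :
    coeff (m11 i k) (X j * P1 n)
      = (if j = i then 1 else 0) + (if j = k then 1 else 0) := by
  rw [coeff_X_mul', support_m11 i k h]
  by_cases hi : j = i
  · subst hi
    simp [h, m11, add_tsub_cancel_left, coeff_P1_single, Ne.symm h]
  · by_cases hk : j = k
    · subst hk
      simp [hi, m11, add_tsub_cancel_right, coeff_P1_single]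
    · simp [hi, hk]

lemma coeff_P2_2 (k : Fin n) : coeff (m2 k) (P2 n) = 1 := by
  rw [P2, coeff_sum]
  simp [coeff_X2_2]

lemma coeff_P2_11 (i k : Fin n) (h : i ≠ k) : coeff (m11 i k) (P2 n) = 0 := by
  rw [P2, coeff_sum]
  simp [coeff_X2_11 _ _ _ h]

lemma coeff_P1sq_2 (k : Fin n) : coeff (m2 k) (P1 n ^ 2) = 1 := by
  have : P1 n ^ 2 = ∑ l, X l * P1 n := by rw [pow_two, P1, Finset.sum_mul]
  rw [this, coeff_sum]
  simp [coeff_XP1_2]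

lemma coeff_P1sq_11 (i k : Fin n) (h : i ≠ k) : coeff (m11 i k) (P1 n ^ 2) = 2 := by
  have : P1 n ^ 2 = ∑ l, X l * P1 n := by rw [pow_two, P1, Finset.sum_mul]
  rw [this, coeff_sum]
  simp [coeff_XP1_11 _ _ _ h, Finset.sum_add_distrib]
  norm_num

lemma polarE2_f (n : ℕ) (a b c : ℝ) :
    (∑ j : Fin n, X j * pderiv j (pderiv j (a • msym3 n + b • msym21 n + c • msym111 n)))
      = Ep n a b := by
  have h : ∀ j : Fin n, X j * pderiv j (pderiv j (a • msym3 n + b • msym21 n + c • msym111 n))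
      = C (6*a - 2*b) * X j ^ 2 + C (2*b) * (X j * P1 n) := by
    intro j
    rw [pderiv_f, polarE2_eq_aux]
    ring
  rw [Finset.sum_congr rfl (fun j _ => h j), Finset.sum_add_distrib,
    ← Finset.mul_sum, ← Finset.mul_sum, ← Finset.sum_mul]
  rw [show (∑ i : Fin n, X i ^ 2 : MvPolynomial (Fin n) ℝ) = P2 n from rfl,
    show (∑ i : Fin n, X i : MvPolynomial (Fin n) ℝ) = P1 n from rfl, Ep, ← pow_two]

lemma sum_gp (n : ℕ) (a b c : ℝ) : ∑ j : Fin n, gp n a b c j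
    = C (3*a - 3*b + c + (n:ℝ) * (b - c*(2⁻¹:ℝ))) * P2 n
      + C (2*b - c + (n:ℝ) * (c*(2⁻¹:ℝ))) * P1 n ^ 2 := by
  simp only [gp, Finset.sum_add_distrib, ← Finset.mul_sum]
  rw [Finset.sum_const, Finset.sum_const, Finset.card_univ, Fintype.card_fin,
    nsmul_eq_mul, nsmul_eq_mul]
  rw [show ((n:ℕ) : MvPolynomial (Fin n) ℝ) = C ((n:ℕ) : ℝ) from (map_natCast C n).symm]
  rw [← Finset.sum_mul,
    show (∑ i : Fin n, X i ^ 2 : MvPolynomial (Fin n) ℝ) = P2 n from rfl,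
    show (∑ i : Fin n, X i : MvPolynomial (Fin n) ℝ) = P1 n from rfl]
  simp only [map_add, map_sub, map_mul]
  ring

lemma coeff_gp_2 (n : ℕ) (a b c : ℝ) (j k : Fin n) :
    coeff (m2 k) (gp n a b c j) = (if j = k then 3*a - b else 0) + b := by
  simp only [gp, coeff_add, coeff_C_mul, coeff_X2_2, coeff_XP1_2, coeff_P2_2, coeff_P1sq_2]
  split_ifs <;> ring

lemma coeff_gp_11 (n : ℕ) (a b c : ℝ) (j i k : Fin n) (h : i ≠ k) :
    coeff (m11 i k) (gp n a b c j)
      = (2*b - c) * ((if j = i then 1 else 0) + (if j = k then 1 else 0)) + c := by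
  simp only [gp, coeff_add, coeff_C_mul, coeff_X2_11 _ _ _ h, coeff_XP1_11 _ _ _ h,
    coeff_P2_11 _ _ h, coeff_P1sq_11 _ _ h]
  ring

lemma coeff_Ep_2 (n : ℕ) (a b : ℝ) (k : Fin n) : coeff (m2 k) (Ep n a b) = 6*a := by
  simp only [Ep, coeff_add, coeff_C_mul, coeff_P2_2, coeff_P1sq_2]
  ring

lemma coeff_Ep_11 (n : ℕ) (a b : ℝ) (i k : Fin n) (h : i ≠ k) :
    coeff (m11 i k) (Ep n a b) = 4*b := by
  simp only [Ep, coeff_add, coeff_C_mul, coeff_P2_11 _ _ h, coeff_P1sq_11 _ _ h]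
  ring

lemma key2 (n : ℕ) (a b c : ℝ) (w : Fin n → ℝ) (μ : ℝ) (k : Fin n) :
    coeff (m2 k) ((∑ j : Fin n, w j • gp n a b c j) + μ • Ep n a b)
      = (3*a - b) * w k + b * (∑ j, w j) + 6*a*μ := by
  rw [coeff_add, coeff_smul, coeff_sum, coeff_Ep_2]
  simp only [coeff_smul, coeff_gp_2, smul_eq_mul, mul_add, mul_ite, mul_zero,
    Finset.sum_add_distrib, Finset.sum_ite_eq', Finset.mem_univ, if_true]
  rw [← Finset.sum_mul]
  ring

lemma key11 (n : ℕ) (a b c : ℝ) (w : Fin n → ℝ) (μ : ℝ) (i k : Fin n) (h : i ≠ k) :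
    coeff (m11 i k) ((∑ j : Fin n, w j • gp n a b c j) + μ • Ep n a b)
      = (2*b - c) * (w i + w k) + c * (∑ j, w j) + 4*b*μ := by
  rw [coeff_add, coeff_smul, coeff_sum, coeff_Ep_11 _ _ _ _ _ h]
  simp only [coeff_smul, coeff_gp_11 (h := h), smul_eq_mul, mul_add, add_mul, mul_ite,
    mul_one, mul_zero, Finset.sum_add_distrib, Finset.sum_ite_eq', Finset.mem_univ, if_true]
  rw [← Finset.sum_mul]
  ring

lemma exists_third {n : ℕ} (hn : 3 ≤ n) (i j : Fin n) : ∃ k : Fin n, k ≠ i ∧ k ≠ j := by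
  have hsub : ({i, j} : Finset (Fin n)) ⊆ Finset.univ := Finset.subset_univ _
  have h1 : 0 < (Finset.univ \ {i, j} : Finset (Fin n)).card := by
    rw [Finset.card_sdiff_of_subset hsub, Finset.card_univ, Fintype.card_fin]
    have : ({i, j} : Finset (Fin n)).card ≤ 2 :=
      (Finset.card_insert_le _ _).trans (by simp)
    omega
  obtain ⟨k, hk⟩ := Finset.card_pos.mp h1
  simp only [Finset.mem_sdiff, Finset.mem_univ, true_and, Finset.mem_insert,
    Finset.mem_singleton, not_or] at hk
  exact ⟨k, hk.1, hk.2⟩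

lemma solve {n : ℕ} (hn : 3 ≤ n) (a b c : ℝ) (hprop : ¬(b = 3*a ∧ c = 6*a))
    (w : Fin n → ℝ) (μ : ℝ)
    (h2 : ∀ k, (3*a - b) * w k + b * (∑ j, w j) + 6*a*μ = 0)
    (h11 : ∀ i k : Fin n, i ≠ k → (2*b - c) * (w i + w k) + c * (∑ j, w j) + 4*b*μ = 0) :
    ∃ l : ℝ, (∀ k, w k = l)
      ∧ (3*a + ((n:ℝ)-1)*b) * l + 6*a*μ = 0
      ∧ (4*b + ((n:ℝ)-2)*c) * l + 4*b*μ = 0 := by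
  have heq : ∀ i k : Fin n, w i = w k := by
    by_cases hab : 3*a - b = 0
    · have hbc : 2*b - c ≠ 0 := by
        intro h0
        exact hprop ⟨by linarith, by linarith⟩
      intro i k
      by_cases hik : i = k
      · rw [hik]
      · obtain ⟨m, hmi, hmk⟩ := exists_third hn i k
        have e1 := h11 i m (fun h => hmi h.symm)
        have e2 := h11 k m (fun h => hmk h.symm)
        have h3 : (2*b - c) * (w i + w m) = (2*b - c) * (w k + w m) := by linarith
        have := mul_left_cancel₀ hbc h3
        linarith
    · intro i k
      have hi := h2 i; have hk := h2 k
      have h3 : (3*a - b) * w i = (3*a - b) * w k := by linarith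
      exact mul_left_cancel₀ hab h3
  have h0n : 0 < n := by omega
  have h1n : 1 < n := by omega
  set l := w ⟨0, h0n⟩ with hl
  have hall : ∀ k, w k = l := fun k => heq k ⟨0, h0n⟩
  have hsum : (∑ j, w j) = (n:ℝ) * l := by
    rw [Finset.sum_congr rfl (fun j _ => hall j), Finset.sum_const, Finset.card_univ,
      Fintype.card_fin, nsmul_eq_mul]
  refine ⟨l, hall, ?_, ?_⟩
  · have h := h2 ⟨0, h0n⟩
    rw [hsum, ← hl] at h
    linear_combination h
  · have hne : (⟨0, h0n⟩ : Fin n) ≠ ⟨1, h1n⟩ := by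
      intro h; exact absurd (congrArg Fin.val h) (by simp)
    have h := h11 _ _ hne
    rw [hsum, hall ⟨0, h0n⟩, hall ⟨1, h1n⟩] at h
    linear_combination h

lemma indep_all {n : ℕ} (hn : 3 ≤ n) (a b c : ℝ) (hprop : ¬(b = 3*a ∧ c = 6*a))
    (hdet : 6*a*(4*b+((n:ℝ)-2)*c) - 4*b*(3*a+((n:ℝ)-1)*b) ≠ 0) :
    LinearIndependent ℝ (Sum.elim (gp n a b c) (fun _ : Unit => Ep n a b)) := by
  rw [Fintype.linearIndependent_iff]
  intro ℓ hl
  set w : Fin n → ℝ := fun j => ℓ (Sum.inl j) with hw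
  set μ : ℝ := ℓ (Sum.inr ()) with hμ
  have hsum : (∑ j : Fin n, w j • gp n a b c j) + μ • Ep n a b = 0 := by
    rw [← hl, Fintype.sum_sum_type]
    simp; rfl
  have h2 : ∀ k, (3*a - b) * w k + b * (∑ j, w j) + 6*a*μ = 0 := by
    intro k
    have := congrArg (coeff (m2 k)) hsum
    rwa [key2, coeff_zero] at this
  have h11 : ∀ i k : Fin n, i ≠ k →
      (2*b - c) * (w i + w k) + c * (∑ j, w j) + 4*b*μ = 0 := by
    intro i k h
    have := congrArg (coeff (m11 i k)) hsum
    rwa [key11 _ _ _ _ _ _ _ _ h, coeff_zero] at this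
  obtain ⟨l, hall, e1, e2⟩ := solve hn a b c hprop w μ h2 h11
  have hl0 : (6*a*(4*b+((n:ℝ)-2)*c) - 4*b*(3*a+((n:ℝ)-1)*b)) * l = 0 := by
    linear_combination 6*a*e2 - 4*b*e1
  have hlz : l = 0 := (mul_eq_zero.mp hl0).resolve_left hdet
  have hab : a ≠ 0 ∨ b ≠ 0 := by
    by_contra h
    push_neg at h
    exact hdet (by rw [h.1, h.2]; ring)
  have hμz : μ = 0 := by
    rw [hlz] at e1 e2
    rcases hab with ha | hb
    · have : 6*a*μ = 0 := by linarith
      rcases mul_eq_zero.mp this with h | h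
      · exact absurd (by linarith : a = 0) ha
      · exact h
    · have : 4*b*μ = 0 := by linarith
      rcases mul_eq_zero.mp this with h | h
      · exact absurd (by linarith : b = 0) hb
      · exact h
  intro i
  rcases i with j | u
  · rw [show ℓ (Sum.inl j) = w j from rfl, hall j, hlz]
  · rw [show u = () from rfl, ← hμ, hμz]

lemma indep_gp {n : ℕ} (hn : 3 ≤ n) (a b c : ℝ) (hprop : ¬(b = 3*a ∧ c = 6*a))
    (hAB : ¬(3*a + ((n:ℝ)-1)*b = 0 ∧ 4*b + ((n:ℝ)-2)*c = 0)) :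
    LinearIndependent ℝ (gp n a b c) := by
  rw [Fintype.linearIndependent_iff]
  intro w hl
  have hsum : (∑ j : Fin n, w j • gp n a b c j) + (0:ℝ) • Ep n a b = 0 := by
    rw [hl, zero_smul, add_zero]
  have h2 : ∀ k, (3*a - b) * w k + b * (∑ j, w j) + 6*a*(0:ℝ) = 0 := by
    intro k
    have := congrArg (coeff (m2 k)) hsum
    rwa [key2, coeff_zero] at this
  have h11 : ∀ i k : Fin n, i ≠ k →
      (2*b - c) * (w i + w k) + c * (∑ j, w j) + 4*b*(0:ℝ) = 0 := by
    intro i k h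
    have := congrArg (coeff (m11 i k)) hsum
    rwa [key11 _ _ _ _ _ _ _ _ h, coeff_zero] at this
  obtain ⟨l, hall, e1, e2⟩ := solve hn a b c hprop w 0 h2 h11
  have hlz : l = 0 := by
    rcases not_and_or.mp hAB with hA | hB
    · have : (3*a + ((n:ℝ)-1)*b) * l = 0 := by linarith
      exact (mul_eq_zero.mp this).resolve_left hA
    · have : (4*b + ((n:ℝ)-2)*c) * l = 0 := by linarith
      exact (mul_eq_zero.mp this).resolve_left hB
  intro k
  rw [hall k, hlz]

lemma exceptionSpan_eq (n : ℕ) (a b c : ℝ) :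
    exceptionSpan n (a • msym3 n + b • msym21 n + c • msym111 n)
      = Submodule.span ℝ (Set.range (gp n a b c) ∪ {Ep n a b}) := by
  rw [exceptionSpan, polarE2, polarE2_f,
    show (fun j : Fin n => pderiv j (a • msym3 n + b • msym21 n + c • msym111 n))
      = gp n a b c from funext (pderiv_f n a b c)]

lemma range_elim (n : ℕ) (a b c : ℝ) :
    Set.range (Sum.elim (gp n a b c) (fun _ : Unit => Ep n a b))
      = Set.range (gp n a b c) ∪ {Ep n a b} := by
  rw [Set.Sum.elim_range, Set.range_const]

lemma finrank_case1 {n : ℕ} (hn : 3 ≤ n) (a b c : ℝ) (hprop : ¬(b = 3*a ∧ c = 6*a))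
    (hdet : 6*a*(4*b+((n:ℝ)-2)*c) - 4*b*(3*a+((n:ℝ)-1)*b) ≠ 0) :
    Module.finrank ℝ (Submodule.span ℝ (Set.range (gp n a b c) ∪ {Ep n a b})) = n + 1 := by
  rw [← range_elim]
  rw [finrank_span_eq_card (indep_all hn a b c hprop hdet)]
  simp

lemma ep_mem_case2 {n : ℕ} (a b c : ℝ)
    (hdet : 6*a*(4*b+((n:ℝ)-2)*c) - 4*b*(3*a+((n:ℝ)-1)*b) = 0)
    (hAB : ¬(3*a + ((n:ℝ)-1)*b = 0 ∧ 4*b + ((n:ℝ)-2)*c = 0)) :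
    Ep n a b ∈ Submodule.span ℝ (Set.range (gp n a b c)) := by
  have hex : ∃ t : ℝ, 6*a = t*(3*a+((n:ℝ)-1)*b) ∧ 4*b = t*(4*b+((n:ℝ)-2)*c) := by
    rcases not_and_or.mp hAB with hA | hB
    · refine ⟨6*a/(3*a+((n:ℝ)-1)*b), by rw [div_mul_cancel₀ _ hA], ?_⟩
      rw [div_mul_eq_mul_div, eq_div_iff hA]
      linear_combination -hdet
    · refine ⟨4*b/(4*b+((n:ℝ)-2)*c), ?_, by field_simp⟩
      rw [div_mul_eq_mul_div, eq_div_iff hB]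
      linear_combination hdet
  obtain ⟨t, h1, h2⟩ := hex
  have hEp : Ep n a b = t • ∑ j : Fin n, gp n a b c j := by
    rw [sum_gp, smul_add, smul_eq_C_mul, smul_eq_C_mul, ← mul_assoc, ← mul_assoc,
      ← C_mul, ← C_mul, Ep]
    have r1 : 6*a - 2*b = t*(3*a - 3*b + c + (n:ℝ)*(b - c*(2⁻¹:ℝ))) := by
      linear_combination h1 - h2/2
    have r2 : 2*b = t*(2*b - c + (n:ℝ)*(c*(2⁻¹:ℝ))) := by
      linear_combination h2/2
    exact congrArg₂ (· + ·) (congrArg (· * P2 n) (congrArg C r1))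
      (congrArg (· * P1 n ^ 2) (congrArg C r2))
  rw [hEp]
  exact Submodule.smul_mem _ _ (Submodule.sum_mem _
    (fun j _ => Submodule.subset_span ⟨j, rfl⟩))

lemma finrank_case2 {n : ℕ} (hn : 3 ≤ n) (a b c : ℝ) (hprop : ¬(b = 3*a ∧ c = 6*a))
    (hdet : 6*a*(4*b+((n:ℝ)-2)*c) - 4*b*(3*a+((n:ℝ)-1)*b) = 0)
    (hAB : ¬(3*a + ((n:ℝ)-1)*b = 0 ∧ 4*b + ((n:ℝ)-2)*c = 0)) :
    Module.finrank ℝ (Submodule.span ℝ (Set.range (gp n a b c) ∪ {Ep n a b})) = n := by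
  have hsp : Submodule.span ℝ (Set.range (gp n a b c) ∪ {Ep n a b})
      = Submodule.span ℝ (Set.range (gp n a b c)) := by
    rw [Submodule.span_union, sup_eq_left]
    rw [Submodule.span_le]
    exact Set.singleton_subset_iff.mpr (ep_mem_case2 a b c hdet hAB)
  rw [hsp, finrank_span_eq_card (indep_gp hn a b c hprop hAB)]
  simp

lemma finrank_case3 {n : ℕ} (hn : 3 ≤ n) (a b c : ℝ) (hprop : ¬(b = 3*a ∧ c = 6*a))
    (hA : 3*a + ((n:ℝ)-1)*b = 0) (hB : 4*b + ((n:ℝ)-2)*c = 0) :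
    Module.finrank ℝ (Submodule.span ℝ (Set.range (gp n a b c) ∪ {Ep n a b})) = n := by
  have hn3 : (3:ℝ) ≤ (n:ℝ) := by exact_mod_cast hn
  have hb : b ≠ 0 := by
    intro hb0
    rw [hb0] at hA hB
    have ha0 : a = 0 := by linarith
    have hc0 : c = 0 := by
      have h' : ((n:ℝ)-2) * c = 0 := by linarith
      rcases mul_eq_zero.mp h' with h'' | h''
      · linarith
      · exact h''
    exact hprop ⟨by rw [hb0, ha0]; ring, by rw [hc0, ha0]; ring⟩
  have ha : a ≠ 0 := by
    intro ha0
    rw [ha0] at hA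
    have h' : ((n:ℝ)-1) * b = 0 := by linarith
    rcases mul_eq_zero.mp h' with h'' | h''
    · linarith
    · exact hb h''
  have h3ab : 3*a - b ≠ 0 := by
    intro h
    have h' : (n:ℝ) * b = 0 := by linarith
    rcases mul_eq_zero.mp h' with h'' | h''
    · linarith
    · exact hb h''
  have hsum0 : ∑ j : Fin n, gp n a b c j = 0 := by
    rw [sum_gp]
    have z1 : 3*a - 3*b + c + (n:ℝ)*(b - c*(2⁻¹:ℝ)) = 0 := by linear_combination hA - hB/2
    have z2 : 2*b - c + (n:ℝ)*(c*(2⁻¹:ℝ)) = 0 := by linear_combination hB/2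
    rw [z1, z2]
    simp
  have h0n : 0 < n := by omega
  set j₀ : Fin n := ⟨0, h0n⟩ with hj₀
  set H : Fin n → MvPolynomial (Fin n) ℝ :=
    fun k => if k = j₀ then Ep n a b else gp n a b c k with hH
  have hspan : Submodule.span ℝ (Set.range (gp n a b c) ∪ {Ep n a b})
      = Submodule.span ℝ (Set.range H) := by
    apply le_antisymm
    · rw [Submodule.span_le]
      rintro x hx
      rcases hx with ⟨j, rfl⟩ | hx
      · by_cases hj : j = j₀
        · have hadd := Finset.sum_erase_add Finset.univ (gp n a b c) (Finset.mem_univ j)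
          rw [hsum0] at hadd
          have hrep : gp n a b c j = -∑ k ∈ Finset.univ.erase j, gp n a b c k :=
            eq_neg_of_add_eq_zero_right hadd
          rw [SetLike.mem_coe, hrep]
          refine Submodule.neg_mem _ (Submodule.sum_mem _ (fun k hk => ?_))
          have hk' : k ≠ j₀ := by
            rw [← hj]
            exact (Finset.mem_erase.mp hk).1
          have hHk : gp n a b c k = H k := by simp [hH, hk']
          rw [hHk]
          exact Submodule.subset_span ⟨k, rfl⟩
        · have hHj : gp n a b c j = H j := by simp [hH, hj]
          rw [SetLike.mem_coe, hHj]
          exact Submodule.subset_span ⟨j, rfl⟩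
      · rcases hx with rfl
        have hHj : Ep n a b = H j₀ := by simp [hH]
        rw [SetLike.mem_coe, hHj]
        exact Submodule.subset_span ⟨j₀, rfl⟩
    · rw [Submodule.span_le]
      rintro x ⟨k, rfl⟩
      by_cases hk : k = j₀
      · have : H k = Ep n a b := by simp [hH, hk]
        rw [SetLike.mem_coe, this]
        exact Submodule.subset_span (Set.mem_union_right _ rfl)
      · have : H k = gp n a b c k := by simp [hH, hk]
        rw [SetLike.mem_coe, this]
        exact Submodule.subset_span (Set.mem_union_left _ ⟨k, rfl⟩)
  have hindep : LinearIndependent ℝ H := by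
    rw [Fintype.linearIndependent_iff]
    intro w hl
    set w' : Fin n → ℝ := fun k => if k = j₀ then 0 else w k with hw'
    set μ : ℝ := w j₀ with hμ
    have hsum : (∑ j : Fin n, w' j • gp n a b c j) + μ • Ep n a b = 0 := by
      have hstep : ∑ k : Fin n, w k • H k
          = (∑ j : Fin n, w' j • gp n a b c j) + μ • Ep n a b := by
        rw [Finset.sum_congr rfl (fun k _ => show w k • H k
            = w' k • gp n a b c k + (if k = j₀ then w k else 0) • Ep n a b from by
          by_cases hk : k = j₀ <;> simp [hH, hw', hk])]
        rw [Finset.sum_add_distrib, ← Finset.sum_smul, Finset.sum_ite_eq',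
          if_pos (Finset.mem_univ j₀)]
      rw [← hstep, hl]
    have h2 : ∀ k, (3*a - b) * w' k + b * (∑ j, w' j) + 6*a*μ = 0 := by
      intro k
      have := congrArg (coeff (m2 k)) hsum
      rwa [key2, coeff_zero] at this
    have hS : b * (∑ j, w' j) + 6*a*μ = 0 := by
      have h := h2 j₀
      have hz : w' j₀ = 0 := by simp [hw']
      rw [hz, mul_zero, zero_add] at h
      exact h
    have hw'0 : ∀ k, w' k = 0 := by
      intro k
      by_cases hk : k = j₀
      · simp [hw', hk]
      · have h := h2 k
        have h4 : (3*a - b) * w' k = 0 := by linarith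
        exact (mul_eq_zero.mp h4).resolve_left h3ab
    have hsig0 : (∑ j, w' j) = 0 := Finset.sum_eq_zero (fun j _ => hw'0 j)
    have hμ0 : μ = 0 := by
      rw [hsig0, mul_zero, zero_add] at hS
      have h6a : 6*a ≠ 0 := by intro h; exact ha (by linarith)
      exact (mul_eq_zero.mp hS).resolve_left h6a
    intro k
    by_cases hk : k = j₀
    · rw [hk, ← hμ, hμ0]
    · have : w k = w' k := by simp [hw', hk]
      rw [this, hw'0]
  rw [hspan, finrank_span_eq_card hindep, Fintype.card_fin]

end AuxException

/-- For `n ≥ 3` and `f = a·m_3 + b·m_{21} + c·m_{111}` with `(a,b,c)` not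
proportional to `(1,3,6)`, `f` is an `n`-exception iff `6a(2b+(n−2)c) = 4(n−1)b²`. -/
theorem isException_iff_degree_three (n : ℕ) (hn : 3 ≤ n) (a b c : ℝ)
    (hprop : ¬ ∃ t : ℝ, a = t ∧ b = 3 * t ∧ c = 6 * t) :
    IsException n (a • msym3 n + b • msym21 n + c • msym111 n) ↔
      6 * a * (2 * b + ((n : ℝ) - 2) * c) = 4 * ((n : ℝ) - 1) * b ^ 2 := by

  have hprop' : ¬(b = 3*a ∧ c = 6*a) := by
    rintro ⟨h1, h2⟩
    exact hprop ⟨a, rfl, by linarith, by linarith⟩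
  have hrw : IsException n (a • msym3 n + b • msym21 n + c • msym111 n)
      ↔ Module.finrank ℝ
        (Submodule.span ℝ (Set.range (gp n a b c) ∪ {Ep n a b})) = n := by
    unfold IsException
    rw [exceptionSpan_eq]
  rw [hrw]
  constructor
  · intro hex
    by_contra hC
    have hdet : 6*a*(4*b+((n:ℝ)-2)*c) - 4*b*(3*a+((n:ℝ)-1)*b) ≠ 0 := by
      intro h
      exact hC (by linear_combination h)
    rw [finrank_case1 hn a b c hprop' hdet] at hex
    omega
  · intro hC
    have hdet : 6*a*(4*b+((n:ℝ)-2)*c) - 4*b*(3*a+((n:ℝ)-1)*b) = 0 := by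
      linear_combination hC
    by_cases hAB : 3*a + ((n:ℝ)-1)*b = 0 ∧ 4*b + ((n:ℝ)-2)*c = 0
    · exact finrank_case3 hn a b c hprop' hAB.1 hAB.2
    · exact finrank_case2 hn a b c hprop' hdet hAB
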